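/- Let I be a finite set of items with |I| = N ≥ 1 and let p ∈ (0,1). Then the minimum of RBO(X,Y)@N over all pairs of length-N rankings X, Y into I equals (1−p)·( 2·(p^{⌊N/2⌋} − p^{N})/(1−p) − N·ℓ ), where ℓ = p^{⌊N/2⌋}·∑_{n=0}^{∞} p^{n}/(n+⌊N/2⌋+1) − p^{N}·∑_{n=0}^{∞} p^{n}/(n+N+1). -/

import Mathlib

open Finset

/-- The set of the first `d` values of a ranking `X : Fin k → ι`. -/
def pref {ι : Type*} [DecidableEq ι] {k : ℕ} (X : Fin k → ι) (d : ℕ) : Finset ι :=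
  (Finset.univ.filter fun i : Fin k => (i : ℕ) < d).image X

/-- Rank-Biased Overlap at depth `k` with parameter `p`. -/
noncomputable def RBO {ι : Type*} [DecidableEq ι] {k : ℕ} (p : ℝ) (X Y : Fin k → ι) : ℝ :=
  (1 - p) * ∑ d ∈ Finset.Icc 1 k, p ^ (d - 1) * ((pref X d ∩ pref Y d).card : ℝ) / d

/-! Auxiliary lemmas -/

lemma filter_card_fin (N : ℕ) (P : ℕ → Prop) [DecidablePred P] :
    (Finset.univ.filter fun i : Fin N => P (i : ℕ)).card
      = ((Finset.range N).filter P).card := by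
  rw [Finset.card_filter, Finset.card_filter, Fin.sum_univ_eq_sum_range (fun i => if P i then 1 else 0)]

lemma pref_card {ι : Type*} [DecidableEq ι] {N : ℕ} {X : Fin N → ι}
    (hX : Function.Injective X) (d : ℕ) :
    (pref X d).card = min d N := by
  rw [pref, Finset.card_image_of_injective _ hX,
    filter_card_fin N (fun i => i < d)]
  have : (Finset.range N).filter (fun i => i < d) = Finset.range (min d N) := by
    ext i; simp [Finset.mem_filter, Finset.mem_range]; omega
  rw [this, Finset.card_range]

/-- Lower bound on overlap via inclusion-exclusion. -/
lemma inter_card_ge {ι : Type*} [Fintype ι] [DecidableEq ι] {N : ℕ}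
    (hN : Fintype.card ι = N) {X Y : Fin N → ι}
    (hX : Function.Injective X) (hY : Function.Injective Y) {d : ℕ} (hd : d ≤ N) :
    d - (N - d) ≤ (pref X d ∩ pref Y d).card := by
  have h := Finset.card_inter_add_card_union (pref X d) (pref Y d)
  have hu : (pref X d ∪ pref Y d).card ≤ N := by
    have := Finset.card_le_univ (pref X d ∪ pref Y d)
    rwa [hN] at this
  have h1 : (pref X d).card = d := by rw [pref_card hX]; omega
  have h2 : (pref Y d).card = d := by rw [pref_card hY]; omega
  omega

/-- Overlap of a ranking with its reverse. -/
lemma inter_card_rev {ι : Type*} [DecidableEq ι] {N : ℕ}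
    (E : Fin N ≃ ι) {d : ℕ} (hd1 : 1 ≤ d) (hd : d ≤ N) :
    (pref (fun i => E i) d ∩ pref (fun i => E i.rev) d).card = d - (N - d) := by
  classical
  have himg : pref (fun i : Fin N => E i.rev) d
      = ((Finset.univ.filter fun i : Fin N => (i.rev : ℕ) < d)).image (fun i => E i) := by
    rw [pref]
    ext x
    simp only [Finset.mem_image, Finset.mem_filter, Finset.mem_univ, true_and]
    constructor
    · rintro ⟨j, hj, rfl⟩; exact ⟨j.rev, by simpa [Fin.rev_rev] using hj, rfl⟩
    · rintro ⟨j, hj, rfl⟩; exact ⟨j.rev, by simpa using hj, by simp [Fin.rev_rev]⟩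
  rw [pref, himg, ← Finset.image_inter _ _ E.injective,
    Finset.card_image_of_injective _ E.injective, ← Finset.filter_and]
  have hP : (Finset.univ.filter fun i : Fin N => (i : ℕ) < d ∧ (i.rev : ℕ) < d)
      = Finset.univ.filter fun i : Fin N => (fun n => n < d ∧ N - (n + 1) < d) (i : ℕ) := by
    apply Finset.filter_congr; intro i _; simp [Fin.val_rev]
  rw [hP, filter_card_fin N (fun n => n < d ∧ N - (n + 1) < d)]
  have : (Finset.range N).filter (fun n => n < d ∧ N - (n + 1) < d)
      = Finset.Ico (N - d) d := by
    ext i; simp [Finset.mem_filter, Finset.mem_range, Finset.mem_Ico]; omega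
  rw [this, Nat.card_Ico]

lemma summable_aux {p : ℝ} (hp0 : 0 < p) (hp1 : p < 1) :
    Summable (fun d : ℕ => p ^ d / ((d : ℝ) + 1)) := by
  apply Summable.of_nonneg_of_le (fun n => by positivity)
    (fun n => ?_) (summable_geometric_of_lt_one hp0.le hp1)
  exact div_le_self (by positivity) (by exact_mod_cast Nat.le_add_left 1 n)

lemma tsum_tail {p : ℝ} (hp0 : 0 < p) (hp1 : p < 1) (k : ℕ) :
    p ^ k * ∑' n : ℕ, p ^ n / ((n : ℝ) + k + 1)
      = (∑' d : ℕ, p ^ d / ((d : ℝ) + 1))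
        - ∑ i ∈ Finset.range k, p ^ i / ((i : ℝ) + 1) := by
  have hF := summable_aux hp0 hp1
  have h := Summable.sum_add_tsum_nat_add (f := fun d : ℕ => p ^ d / ((d : ℝ) + 1)) k hF
  have h2 : (fun n : ℕ => p ^ (n + k) / (((n + k : ℕ) : ℝ) + 1))
      = fun n : ℕ => p ^ k * (p ^ n / ((n : ℝ) + k + 1)) := by
    funext n; push_cast; rw [pow_add]; ring
  rw [h2] at h
  rw [tsum_mul_left] at h
  linarith

lemma sum_Ioc_shift {M : Type*} [AddCommMonoid M] (f : ℕ → M) (a b : ℕ) :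
    ∑ d ∈ Finset.Ioc a b, f d = ∑ i ∈ Finset.Ico a b, f (i + 1) := by
  rw [← Finset.Ico_add_one_add_one_eq_Ioc, Finset.sum_Ico_eq_sum_range, Finset.sum_Ico_eq_sum_range]
  simp only [Nat.add_sub_add_right]
  exact Finset.sum_congr rfl fun i _ => by congr 1; omega

/-- The closed form equals the finite sum of minimal overlaps. -/
lemma closed_form (N : ℕ) (hN1 : 1 ≤ N) {p : ℝ} (hp0 : 0 < p) (hp1 : p < 1) :
    2 * (p ^ (N / 2) - p ^ N) / (1 - p)
      - N * (p ^ (N / 2) * ∑' n : ℕ, p ^ n / ((n : ℝ) + (N / 2 : ℕ) + 1)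
        - p ^ N * ∑' n : ℕ, p ^ n / ((n : ℝ) + N + 1))
    = ∑ d ∈ Finset.Icc 1 N, p ^ (d - 1) * ((d - (N - d) : ℕ) : ℝ) / d := by
  set m := N / 2 with hm
  have hmN : m ≤ N := Nat.div_le_self N 2
  have hp1' : (1 : ℝ) - p ≠ 0 := by linarith
  -- split the sum
  have hsplit : ∑ d ∈ Finset.Icc 1 N, p ^ (d - 1) * ((d - (N - d) : ℕ) : ℝ) / d
      = ∑ d ∈ Finset.Ioc m N, p ^ (d - 1) * ((d - (N - d) : ℕ) : ℝ) / d := by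
    rw [show Finset.Icc 1 N = Finset.Ioc 0 N from Finset.Icc_add_one_left_eq_Ioc 0 N,
      ← Finset.sum_Ioc_consecutive _ (Nat.zero_le m) hmN]
    have : ∑ d ∈ Finset.Ioc 0 m, p ^ (d - 1) * ((d - (N - d) : ℕ) : ℝ) / d = 0 := by
      apply Finset.sum_eq_zero
      intro d hd
      simp only [Finset.mem_Ioc] at hd
      have : d - (N - d) = 0 := by omega
      rw [this]; simp
    rw [this, zero_add]
  rw [hsplit]
  -- rewrite each term
  have hterm : ∀ d ∈ Finset.Ioc m N, p ^ (d - 1) * ((d - (N - d) : ℕ) : ℝ) / d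
      = 2 * p ^ (d - 1) - (N : ℝ) * (p ^ (d - 1) / d) := by
    intro d hd
    simp only [Finset.mem_Ioc] at hd
    have h2d : N ≤ 2 * d := by omega
    have hcast : ((d - (N - d) : ℕ) : ℝ) = 2 * (d : ℝ) - N := by
      have : (d - (N - d)) = 2 * d - N := by omega
      rw [this]; push_cast [h2d]; ring
    have hd0 : (d : ℝ) ≠ 0 := by
      have : 1 ≤ d := by omega
      exact_mod_cast Nat.one_le_iff_ne_zero.mp this
    rw [hcast]; field_simp
  rw [Finset.sum_congr rfl hterm, Finset.sum_sub_distrib, ← Finset.mul_sum, ← Finset.mul_sum]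
  -- geometric part
  have hgeom : ∑ d ∈ Finset.Ioc m N, p ^ (d - 1) = (p ^ m - p ^ N) / (1 - p) := by
    rw [sum_Ioc_shift (fun d => p ^ (d - 1)) m N]
    simp only [Nat.add_sub_cancel]
    rw [geom_sum_Ico (by linarith : p ≠ 1) hmN, ← neg_sub (p ^ m) (p ^ N),
      ← neg_sub (1 : ℝ) p, neg_div_neg_eq]
  -- tsum part
  have htsum : p ^ m * (∑' n : ℕ, p ^ n / ((n : ℝ) + m + 1))
      - p ^ N * (∑' n : ℕ, p ^ n / ((n : ℝ) + N + 1))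
      = ∑ d ∈ Finset.Ioc m N, p ^ (d - 1) / d := by
    rw [tsum_tail hp0 hp1 m, tsum_tail hp0 hp1 N,
      sum_Ioc_shift (fun d => p ^ (d - 1) / d) m N]
    have : ∑ i ∈ Finset.Ico m N, p ^ (i + 1 - 1) / ((i + 1 : ℕ) : ℝ)
        = ∑ i ∈ Finset.Ico m N, p ^ i / ((i : ℝ) + 1) := by
      apply Finset.sum_congr rfl; intro i _; push_cast; ring_nf
    rw [this, Finset.sum_Ico_eq_sub _ hmN]
    ring
  rw [hgeom, ← htsum]
  ring

/-- The RBO value for any pair of injective rankings is at least the minimal-overlap sum. -/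
lemma rbo_ge {ι : Type*} [Fintype ι] [DecidableEq ι] {N : ℕ}
    (hN : Fintype.card ι = N) {p : ℝ} (hp0 : 0 < p) (hp1 : p < 1)
    {X Y : Fin N → ι} (hX : Function.Injective X) (hY : Function.Injective Y) :
    (1 - p) * ∑ d ∈ Finset.Icc 1 N, p ^ (d - 1) * ((d - (N - d) : ℕ) : ℝ) / d
      ≤ RBO p X Y := by
  rw [RBO]
  apply mul_le_mul_of_nonneg_left _ (by linarith : (0:ℝ) ≤ 1 - p)
  apply Finset.sum_le_sum
  intro d hd
  simp only [Finset.mem_Icc] at hd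
  have hcard : (d - (N - d) : ℕ) ≤ (pref X d ∩ pref Y d).card :=
    inter_card_ge hN hX hY hd.2
  have hpow : (0 : ℝ) ≤ p ^ (d - 1) := by positivity
  have hd0 : (0 : ℝ) ≤ (d : ℝ) := by positivity
  have hc : ((d - (N - d) : ℕ) : ℝ) ≤ ((pref X d ∩ pref Y d).card : ℝ) := by
    exact_mod_cast hcard
  have hdpos : (0 : ℝ) < (d : ℝ) := by exact_mod_cast hd.1
  gcongr

theorem rbo_min_at_depth_N {ι : Type*} [Fintype ι] [DecidableEq ι]
    (N : ℕ) (hN : Fintype.card ι = N) (hN1 : 1 ≤ N)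
    (p : ℝ) (hp : p ∈ Set.Ioo (0 : ℝ) 1) :
    IsLeast {r : ℝ | ∃ X Y : Fin N → ι, Function.Injective X ∧ Function.Injective Y ∧
        RBO p X Y = r}
      ((1 - p) * (2 * (p ^ (N / 2) - p ^ N) / (1 - p)
        - N * (p ^ (N / 2) * ∑' n : ℕ, p ^ n / ((n : ℝ) + (N / 2 : ℕ) + 1)
          - p ^ N * ∑' n : ℕ, p ^ n / ((n : ℝ) + N + 1)))) := by
  obtain ⟨hp0, hp1⟩ := hp
  have hval : (1 - p) * (2 * (p ^ (N / 2) - p ^ N) / (1 - p)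
        - N * (p ^ (N / 2) * ∑' n : ℕ, p ^ n / ((n : ℝ) + (N / 2 : ℕ) + 1)
          - p ^ N * ∑' n : ℕ, p ^ n / ((n : ℝ) + N + 1)))
      = (1 - p) * ∑ d ∈ Finset.Icc 1 N, p ^ (d - 1) * ((d - (N - d) : ℕ) : ℝ) / d := by
    rw [closed_form N hN1 hp0 hp1]
  constructor
  · -- membership: reversed rankings
    set E : Fin N ≃ ι := (Fintype.equivFinOfCardEq hN).symm with hE
    refine ⟨fun i => E i, fun i => E i.rev, E.injective,
      E.injective.comp Fin.rev_injective, ?_⟩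
    rw [hval, RBO]
    congr 1
    apply Finset.sum_congr rfl
    intro d hd
    simp only [Finset.mem_Icc] at hd
    rw [inter_card_rev E hd.1 hd.2]
  · rintro r ⟨X, Y, hX, hY, rfl⟩
    rw [hval]
    exact rbo_ge hN hp0 hp1 hX hY
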